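/- Let G be a graph obtained from two vertex-disjoint graphs G₁, G₂ by adding k edges e₁, ..., e_k, each joining a vertex of G₁ to a vertex of G₂, where k ≥ 1. Suppose every simple cycle of G₁ has s₁-sum 0 and every simple cycle of G₂ has s₂-sum 0 for given labelings s₁, s₂ into ℤ/2ℤ. Then there exists an extension s of s₁ and s₂ to all of E(G) such that every element of the cycle space of G has s-sum 0. -/

import Mathlib

open SimpleGraph

private lemma zmod2_add_self : ∀ a : ZMod 2, a + a = 0 := by decide

/-- Closed walks have zero edge sum (with multiplicity) if all cycles do. -/
private lemma closed_walk_sum {V : Type*} [DecidableEq V] {G : SimpleGraph V}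
    {s : Sym2 V → ZMod 2}
    (hs : ∀ (v : V) (w : G.Walk v v), w.IsCycle → ∑ e ∈ w.edges.toFinset, s e = 0) :
    ∀ (n : ℕ) (v : V) (w : G.Walk v v), w.length ≤ n → (w.edges.map s).sum = 0 := by
  intro n
  induction n with
  | zero =>
    intro v w hw
    have : w = .nil := Walk.nil_iff_eq_nil.mp (Walk.length_eq_zero_iff.mp (Nat.le_zero.mp hw))
    subst this; simp
  | succ n ih =>
    intro v w hw
    cases w with
    | nil => simp
    | @cons _ u _ h w' =>
      by_cases hnp : w'.support.Nodup
      · by_cases he : s(v, u) ∈ w'.edges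
        · -- the first edge reappears: forced to be the 2-cycle v-u-v
          cases w' with
          | nil => simp at he
          | @cons _ z _ h₂ w₂ =>
            rw [Walk.edges_cons, List.mem_cons] at he
            rcases he with he1 | he2
            · have hz : z = v := by
                rw [Sym2.eq_iff] at he1
                rcases he1 with ⟨hvu, _⟩ | ⟨hvz, _⟩
                · exact absurd hvu h.ne
                · exact hvz.symm
              subst hz
              have hw2 : w₂ = .nil := by
                cases w₂ with
                | nil => rfl
                | cons h₃ w₃ =>
                  exfalso
                  rw [Walk.support_cons, List.nodup_cons] at hnp
                  have := hnp.2
                  rw [Walk.support_cons, List.nodup_cons] at this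
                  exact this.1 w₃.end_mem_support
              subst hw2
              simp only [Walk.edges_cons, Walk.edges_nil, List.map_cons, List.map_nil,
                List.sum_cons, List.sum_nil, add_zero]
              rw [Sym2.eq_swap]
              exact zmod2_add_self _
            · exfalso
              rw [Walk.support_cons, List.nodup_cons] at hnp
              exact hnp.1 (w₂.snd_mem_support_of_mem_edges he2)
        · -- it's a cycle
          have hc : (Walk.cons h w').IsCycle :=
            (Walk.cons_isCycle_iff w' h).mpr ⟨(Walk.isPath_def w').mpr hnp, he⟩
          have h0 := hs v (Walk.cons h w') hc
          rwa [List.sum_toFinset _ hc.isTrail.edges_nodup] at h0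
      · -- repeated interior vertex: split
        obtain ⟨x, hx⟩ := List.exists_duplicate_iff_not_nodup.mpr hnp
        have hxc : 2 ≤ w'.support.count x := List.duplicate_iff_two_le_count.mp hx
        have hx1 : x ∈ w'.support := List.duplicate_iff_two_le_count.mp hx |> fun h' =>
          List.count_pos_iff.mp (by omega)
        have hspec := w'.take_spec hx1
        set t := w'.takeUntil x hx1 with ht
        set d := w'.dropUntil x hx1 with hd
        have hct : t.support.count x = 1 := w'.count_support_takeUntil_eq_one hx1
        have hxd : x ∈ d.support.tail := by
          have := congrArg (fun (q : G.Walk u v) => q.support.count x) hspec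
          simp only [Walk.support_append, List.count_append] at this
          rw [hct] at this
          have : 1 ≤ d.support.tail.count x := by omega
          exact List.count_pos_iff.mp (by omega)
        clear_value t d
        clear hct hx hxc hnp ht hd
        cases d with
        | nil => simp at hxd
        | @cons _ y _ hdadj d₂ =>
          simp only [Walk.support_cons, List.tail_cons] at hxd
          have hspec₂ := d₂.take_spec hxd
          set m := d₂.takeUntil x hxd with hm
          set r := d₂.dropUntil x hxd with hr
          clear_value m r
          -- length bookkeeping
          have hl : w'.length = t.length + (m.length + r.length) + 1 := by
            have h1 := congrArg Walk.length hspec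
            have h2 := congrArg Walk.length hspec₂
            simp only [Walk.length_append, Walk.length_cons] at h1 h2
            omega
          have hwn : w'.length ≤ n := by
            simp only [Walk.length_cons] at hw; omega
          have ho := ih v ((Walk.cons h t).append r) (by
            simp only [Walk.length_append, Walk.length_cons]; omega)
          have hc := ih x (Walk.cons hdadj m) (by
            simp only [Walk.length_cons]; omega)
          rw [← hspec, ← hspec₂]
          simp only [Walk.edges_cons, Walk.edges_append, List.map_cons, List.map_append,
            List.sum_cons, List.sum_append] at ho hc ⊢
          linear_combination ho + hc


/-- A labeling annihilating all cycles is a coboundary on edges. -/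
private lemma exists_potential {V : Type*} [DecidableEq V] {G : SimpleGraph V}
    {s : Sym2 V → ZMod 2}
    (hs : ∀ (v : V) (w : G.Walk v v), w.IsCycle → ∑ e ∈ w.edges.toFinset, s e = 0) :
    ∃ φ : V → ZMod 2, ∀ a b, G.Adj a b → s s(a, b) = φ a + φ b := by
  classical
  have hclosed : ∀ (v : V) (w : G.Walk v v), (w.edges.map s).sum = 0 :=
    fun v w => closed_walk_sum hs w.length v w le_rfl
  have hreach : ∀ a : V, G.Reachable (G.connectedComponentMk a).out a := by
    intro a
    exact ConnectedComponent.exact (G.connectedComponentMk a).out_eq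
  refine ⟨fun a => (((hreach a).some).edges.map s).sum, ?_⟩
  intro a b hab
  have hroot : (G.connectedComponentMk a).out = (G.connectedComponentMk b).out := by
    rw [ConnectedComponent.connectedComponentMk_eq_of_adj hab]
  set wa := (hreach a).some with hwa
  set wb := (hreach b).some with hwb
  have hW := hclosed _ (wa.append ((Walk.cons hab wb.reverse).copy rfl hroot.symm))
  simp only [Walk.edges_append, Walk.edges_copy, Walk.edges_cons, Walk.edges_reverse,
    List.map_append, List.sum_append, List.map_cons, List.sum_cons, List.map_reverse,
    List.sum_reverse] at hW
  simp only []
  linear_combination hW - zmod2_add_self ((wa.edges.map s).sum) - zmod2_add_self ((wb.edges.map s).sum)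

/-- Telescoping: the edge sum of a walk for a coboundary is the potential difference. -/
private lemma walk_sum_coboundary {V : Type*} {G : SimpleGraph V} {s : Sym2 V → ZMod 2}
    {φ : V → ZMod 2} (hφ : ∀ a b, G.Adj a b → s s(a, b) = φ a + φ b) :
    ∀ {u v : V} (w : G.Walk u v), (w.edges.map s).sum = φ u + φ v := by
  intro u v w
  induction w with
  | nil =>
    simp only [Walk.edges_nil, List.map_nil, List.sum_nil]
    exact (zmod2_add_self _).symm
  | @cons a b c h p ih =>
    simp only [Walk.edges_cons, List.map_cons, List.sum_cons, ih, hφ a b h]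
    linear_combination zmod2_add_self (φ b)


/-- The cycle space of `G` over `ZMod 2`: the span, inside the edge space, of
the edge-set indicator functions of the simple cycles of `G`. -/
def cycleSpace {V : Type*} [DecidableEq V] (G : SimpleGraph V) :
    Submodule (ZMod 2) (Sym2 V → ZMod 2) :=
  Submodule.span (ZMod 2)
    {f | ∃ (v : V) (w : G.Walk v v), w.IsCycle ∧
      f = fun e => if e ∈ w.edges then 1 else 0}

/-- Let `G` (on `V₁ ⊕ V₂`) be obtained from vertex-disjoint graphs
`G₁, G₂` by adding `k ≥ 1` edges `e₁, ..., e_k`, each joining a vertex of `G₁`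
to a vertex of `G₂`. If labelings `s₁, s₂` annihilate every simple cycle of
`G₁`, resp. `G₂`, then there is an extension `s` of `s₁` and `s₂` to all edges
of `G` such that every element of the cycle space of `G` has `s`-sum `0`. -/
theorem stmt_8 {V₁ V₂ : Type*} [Fintype V₁] [Fintype V₂]
    [DecidableEq V₁] [DecidableEq V₂]
    (G₁ : SimpleGraph V₁) (G₂ : SimpleGraph V₂) (k : ℕ) (hk : 1 ≤ k)
    (p : Fin k → V₁ × V₂) (hp : Function.Injective p)
    (G : SimpleGraph (V₁ ⊕ V₂))
    (hadj₁ : ∀ a b : V₁, G.Adj (Sum.inl a) (Sum.inl b) ↔ G₁.Adj a b)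
    (hadj₂ : ∀ a b : V₂, G.Adj (Sum.inr a) (Sum.inr b) ↔ G₂.Adj a b)
    (hcross : ∀ (a : V₁) (b : V₂),
      G.Adj (Sum.inl a) (Sum.inr b) ↔ ∃ i, p i = (a, b))
    (s₁ : Sym2 V₁ → ZMod 2) (s₂ : Sym2 V₂ → ZMod 2)
    (hs₁ : ∀ (v : V₁) (w : G₁.Walk v v), w.IsCycle →
      ∑ e ∈ w.edges.toFinset, s₁ e = 0)
    (hs₂ : ∀ (v : V₂) (w : G₂.Walk v v), w.IsCycle →
      ∑ e ∈ w.edges.toFinset, s₂ e = 0) :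
    ∃ s : Sym2 (V₁ ⊕ V₂) → ZMod 2,
      (∀ e : Sym2 V₁, s (Sym2.map Sum.inl e) = s₁ e) ∧
      (∀ e : Sym2 V₂, s (Sym2.map Sum.inr e) = s₂ e) ∧
      ∀ Z ∈ cycleSpace G, ∑ e, Z e * s e = 0 := by
  classical
  obtain ⟨φ₁, hφ₁⟩ := exists_potential hs₁
  obtain ⟨φ₂, hφ₂⟩ := exists_potential hs₂
  set f : (V₁ ⊕ V₂) → (V₁ ⊕ V₂) → ZMod 2 := fun x y =>
    match x, y with
    | .inl a, .inl b => s₁ s(a, b)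
    | .inr a, .inr b => s₂ s(a, b)
    | .inl a, .inr b => φ₁ a + φ₂ b
    | .inr a, .inl b => φ₁ b + φ₂ a
    with hf
  have hsym : ∀ x y, f x y = f y x := by
    rintro (a | a) (b | b) <;> simp only [hf] <;> rw [Sym2.eq_swap]
  set s : Sym2 (V₁ ⊕ V₂) → ZMod 2 := Sym2.lift ⟨fun x y => f x y, hsym⟩ with hsdef
  have hmk : ∀ x y, s s(x, y) = f x y := fun x y => Sym2.lift_mk _ x y
  have hδ : ∀ x y : V₁ ⊕ V₂, G.Adj x y →
      s s(x, y) = Sum.elim φ₁ φ₂ x + Sum.elim φ₁ φ₂ y := by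
    rintro (a | a) (b | b) hadj
    · rw [hmk]; exact hφ₁ a b ((hadj₁ a b).mp hadj)
    · rw [hmk]; rfl
    · rw [hmk]; simp only [Sum.elim_inl, Sum.elim_inr]; rw [add_comm]
    · rw [hmk]; exact hφ₂ a b ((hadj₂ a b).mp hadj)
  refine ⟨s, ?_, ?_, ?_⟩
  · intro e
    induction e using Sym2.ind with
    | _ a b => rw [Sym2.map_pair_eq, hmk]
  · intro e
    induction e using Sym2.ind with
    | _ a b => rw [Sym2.map_pair_eq, hmk]
  · -- every element of the cycle space sums to zero
    set L : (Sym2 (V₁ ⊕ V₂) → ZMod 2) →ₗ[ZMod 2] ZMod 2 :=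
      { toFun := fun Z => ∑ e, Z e * s e
        map_add' := by intro Z W; simp [add_mul, Finset.sum_add_distrib]
        map_smul' := by intro c Z; simp [Finset.mul_sum, mul_assoc] } with hL
    have hle : cycleSpace G ≤ LinearMap.ker L := by
      rw [cycleSpace, Submodule.span_le]
      rintro Z ⟨v, w, hw, rfl⟩
      simp only [SetLike.mem_coe, LinearMap.mem_ker, hL, LinearMap.coe_mk, AddHom.coe_mk]
      have step : ∀ e : Sym2 (V₁ ⊕ V₂),
          (if e ∈ w.edges then (1 : ZMod 2) else 0) * s e
            = if e ∈ w.edges.toFinset then s e else 0 := by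
        intro e; by_cases h : e ∈ w.edges <;> simp [h]
      rw [Finset.sum_congr rfl fun e _ => step e, Finset.sum_ite_mem, Finset.univ_inter,
        List.sum_toFinset _ hw.isTrail.edges_nodup, walk_sum_coboundary hδ w]
      exact zmod2_add_self _
    intro Z hZ
    exact hle hZ
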